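/- For k = 1 colliding non-retaining RBF with memory M and threshold σ < M, the stationary probabilities are π_i = (1/(M-i)) / (∑_{j=0}^{σ} 1/(M-j)) and hence the long-term average false positive rate equals ∑_{i=0}^{σ} i / (M (M-i) ∑_{j=0}^{σ} 1/(M-j)). -/

import Mathlib

/-- Closed form for the k = 1 colliding non-retaining RBF:
π_i = (1/(M-i)) / (∑_{j=0}^σ 1/(M-j)) is stationary for the chain, and the
long-term average false positive rate ∑ π_i·(i/M) equals
∑_{i=0}^σ i / (M (M-i) ∑_{j=0}^σ 1/(M-j)). -/
theorem stmt_13 (M σ : ℕ) (hσ : σ < M) :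
    let S : ℝ := ∑ j ∈ Finset.range (σ + 1), 1 / ((M : ℝ) - (j : ℝ))
    let π : ℕ → ℝ := fun i => (1 / ((M : ℝ) - (i : ℝ))) / S
    let P : ℕ → ℕ → ℝ := fun i j =>
      if i < σ then
        (if j = i then (i : ℝ) / (M : ℝ)
         else if j = i + 1 then ((M : ℝ) - (i : ℝ)) / (M : ℝ) else 0)
      else
        (if j = 0 then ((M : ℝ) - (σ : ℝ)) / (M : ℝ)
         else if j = σ then (σ : ℝ) / (M : ℝ) else 0)
    (∀ i ≤ σ, π i = ∑ j ∈ Finset.range (σ + 1), π j * P j i) ∧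
      ∑ i ∈ Finset.range (σ + 1), π i * ((i : ℝ) / (M : ℝ)) =
        ∑ i ∈ Finset.range (σ + 1), (i : ℝ) / ((M : ℝ) * ((M : ℝ) - (i : ℝ)) * S) := by
  intro S π P
  have hMi : ∀ i : ℕ, i ≤ σ → (0:ℝ) < (M:ℝ) - (i:ℝ) := by
    intro i hi
    have : (i:ℝ) < (M:ℝ) := by exact_mod_cast lt_of_le_of_lt hi hσ
    linarith
  have hM0 : (M:ℝ) ≠ 0 := by
    have := hMi 0 (Nat.zero_le _); push_cast at this; linarith
  have hS : 0 < S := by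
    apply Finset.sum_pos
    · intro j hj
      have := hMi j (Nat.lt_succ_iff.mp (Finset.mem_range.mp hj))
      positivity
    · exact Finset.nonempty_range_iff.mpr (Nat.succ_ne_zero _)
  have hS0 : S ≠ 0 := ne_of_gt hS
  constructor
  · intro i hi
    rw [Finset.sum_range_succ]
    have hPσ : ∀ x, P σ x = (if x = 0 then ((M : ℝ) - (σ : ℝ)) / (M : ℝ)
         else if x = σ then (σ : ℝ) / (M : ℝ) else 0) := by
      intro x; simp [P]
    have hbody : ∀ j ∈ Finset.range σ, π j * P j i =
        (if i = j then π j * ((j : ℝ) / (M : ℝ)) else 0) +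
        (if i = j + 1 then π j * (((M : ℝ) - (j : ℝ)) / (M : ℝ)) else 0) := by
      intro j hj
      have hjσ : j < σ := Finset.mem_range.mp hj
      simp only [P, if_pos hjσ]
      rcases eq_or_ne i j with h1 | h1 <;> rcases eq_or_ne i (j+1) with h2 | h2 <;>
        simp_all <;> ring
    rw [Finset.sum_congr rfl hbody, Finset.sum_add_distrib]
    rw [Finset.sum_ite_eq (Finset.range σ) i (fun j => π j * ((j : ℝ) / (M : ℝ)))]
    rcases Nat.eq_zero_or_pos i with hi0 | hipos
    · subst hi0
      have h2 : (∑ j ∈ Finset.range σ, if 0 = j + 1 then π j * (((M : ℝ) - (j : ℝ)) / (M : ℝ)) else 0) = 0 := by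
        apply Finset.sum_eq_zero; intro j hj; simp
      rw [h2, hPσ]
      simp only [if_pos rfl]
      have hσ0 := hMi σ le_rfl
      by_cases h : (0:ℕ) ∈ Finset.range σ
      · have : (0:ℕ) < σ := Finset.mem_range.mp h
        rw [if_pos h]
        simp only [π]
        push_cast
        field_simp
        ring
      · rw [if_neg h]
        have hσz : σ = 0 := by
          by_contra hne
          exact h (Finset.mem_range.mpr (Nat.pos_of_ne_zero hne))
        subst hσz
        simp only [π]
        push_cast
        field_simp
        ring
    · obtain ⟨i', rfl⟩ : ∃ i', i = i' + 1 := ⟨i - 1, (Nat.succ_pred_eq_of_pos hipos).symm⟩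
      have h2 : (∑ j ∈ Finset.range σ, if i' + 1 = j + 1 then π j * (((M : ℝ) - (j : ℝ)) / (M : ℝ)) else 0)
          = π i' * (((M : ℝ) - (i' : ℝ)) / (M : ℝ)) := by
        have : ∀ j, (i' + 1 = j + 1) = (i' = j) := by intro j; simp
        simp only [this]
        rw [Finset.sum_ite_eq (Finset.range σ) i' (fun j => π j * (((M : ℝ) - (j : ℝ)) / (M : ℝ)))]
        rw [if_pos (Finset.mem_range.mpr (lt_of_lt_of_le (Nat.lt_succ_self i') hi))]
      rw [h2, hPσ]
      have hi1 : (M:ℝ) - ((i':ℕ):ℝ) ≠ 0 := ne_of_gt (hMi i' (le_of_lt (lt_of_lt_of_le (Nat.lt_succ_self i') hi)))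
      have hi2 : (M:ℝ) - ((i'+1:ℕ):ℝ) ≠ 0 := ne_of_gt (hMi (i'+1) hi)
      push_cast at hi2
      rcases lt_or_eq_of_le hi with hlt | heq
      · rw [if_pos (Finset.mem_range.mpr hlt), if_neg (Nat.succ_ne_zero i'),
          if_neg (Nat.ne_of_lt hlt)]
        simp only [π]
        push_cast
        field_simp
        ring
      · rw [if_neg (by simp [heq]), if_neg (Nat.succ_ne_zero i'), if_pos heq, heq]
        simp only [π]
        rw [← heq]
        push_cast
        field_simp
        ring
  · apply Finset.sum_congr rfl
    intro i hi
    simp only [π, div_eq_mul_inv, mul_inv, one_mul]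
    ring
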